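/- If J ⊂ K[x_1,...,x_{n-1}] is an almost revlex ideal, then the extension ideal J·K[x_1,...,x_n] is also an almost revlex ideal. -/

import Mathlib

open Finset

/-- Total degree of a monomial (exponent vector). -/
def mdeg {n : ℕ} (α : Fin n →₀ ℕ) : ℕ := α.sum fun _ e => e

/-- A set of exponent vectors is the set of monomials of a monomial ideal. -/
def IsMonIdeal {n : ℕ} (S : Set (Fin n →₀ ℕ)) : Prop :=
  ∀ α ∈ S, ∀ β : Fin n →₀ ℕ, α + β ∈ S

/-- `α` is a minimal monomial generator of the monomial ideal with monomials `S`. -/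
def MinGen {n : ℕ} (S : Set (Fin n →₀ ℕ)) (α : Fin n →₀ ℕ) : Prop :=
  α ∈ S ∧ ∀ β ∈ S, β ≤ α → β = α

/-- Stable monomial ideal (variables ordered `x_1 ≻ ⋯ ≻ x_n`, i.e. index `0` largest). -/
def IsStable {n : ℕ} (S : Set (Fin n →₀ ℕ)) : Prop :=
  ∀ α ∈ S, ∀ m ∈ α.support, (∀ k ∈ α.support, k ≤ m) →
    ∀ i : Fin n, i < m → α - Finsupp.single m 1 + Finsupp.single i 1 ∈ S

def IsStronglyStable {n : ℕ} (S : Set (Fin n →₀ ℕ)) : Prop :=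
  ∀ α ∈ S, ∀ i ∈ α.support, ∀ j : Fin n, j < i →
    α - Finsupp.single i 1 + Finsupp.single j 1 ∈ S

/-- `drlLT α β` : `α` is smaller than `β` in degrevlex with `x_1 ≻ ⋯ ≻ x_n`. -/
def drlLT {n : ℕ} (α β : Fin n →₀ ℕ) : Prop :=
  mdeg α < mdeg β ∨ (mdeg α = mdeg β ∧ ∃ i : Fin n, β i < α i ∧ ∀ j : Fin n, i < j → α j = β j)

def IsAlmostRevLex {n : ℕ} (S : Set (Fin n →₀ ℕ)) : Prop :=
  IsMonIdeal S ∧ ∀ α, MinGen S α → ∀ β : Fin n →₀ ℕ, mdeg β = mdeg α → drlLT α β → β ∈ S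

/-- Combinatorial Hilbert function of `R/J`: number of degree-`t` monomials outside `S`. -/
noncomputable def hilbC {n : ℕ} (S : Set (Fin n →₀ ℕ)) (t : ℕ) : ℕ :=
  {α : Fin n →₀ ℕ | mdeg α = t ∧ α ∉ S}.ncard

/-- `fdiff H s t` is `Δ^s H (t)` with the convention `Δ^s H (0) = 1` for `s ≥ 1`. -/
def fdiff (H : ℕ → ℕ) : ℕ → ℕ → ℤ
  | 0, t => H t
  | _+1, 0 => 1
  | s+1, t+1 => fdiff H s (t+1) - fdiff H s t

/-- Restriction of a monomial in `n+1` variables to the first `n` variables. -/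
noncomputable def restrictFront {n : ℕ} (β : Fin (n + 1) →₀ ℕ) : Fin n →₀ ℕ :=
  Finsupp.comapDomain Fin.castSucc β (Fin.castSucc_injective n).injOn

lemma mdeg_eq_sum {n : ℕ} (α : Fin n →₀ ℕ) : mdeg α = ∑ i, α i := by
  rw [mdeg, Finsupp.sum_fintype]; intro; rfl

lemma restrictFront_apply {n : ℕ} (β : Fin (n+1) →₀ ℕ) (i : Fin n) :
    restrictFront β i = β i.castSucc := rfl

lemma restrictFront_add {n : ℕ} (a b : Fin (n+1) →₀ ℕ) :
    restrictFront (a + b) = restrictFront a + restrictFront b := by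
  ext i; simp [restrictFront_apply]

lemma mdeg_restrict {n : ℕ} (β : Fin (n+1) →₀ ℕ) :
    mdeg β = mdeg (restrictFront β) + β (Fin.last n) := by
  simp [mdeg_eq_sum, Fin.sum_univ_castSucc, restrictFront_apply]

def frontEmb (n : ℕ) : Fin n ↪ Fin (n+1) := ⟨Fin.castSucc, Fin.castSucc_injective n⟩

lemma restrict_embDomain {n : ℕ} (α : Fin n →₀ ℕ) :
    restrictFront (Finsupp.embDomain (frontEmb n) α) = α := by
  ext i
  rw [restrictFront_apply]
  exact Finsupp.embDomain_apply_self (frontEmb n) α i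

lemma embDomain_last {n : ℕ} (α : Fin n →₀ ℕ) :
    Finsupp.embDomain (frontEmb n) α (Fin.last n) = 0 := by
  apply Finsupp.embDomain_notin_range
  rintro ⟨i, hi⟩
  exact absurd hi (Fin.castSucc_lt_last i).ne


/-- If `J ⊂ K[x_1,…,x_n]` is an almost revlex ideal, then its extension
`J·K[x_1,…,x_{n+1}]` (whose monomials are exactly those whose restriction to the first `n`
variables lies in `J`) is also an almost revlex ideal. -/
theorem extension_isAlmostRevLex {n : ℕ}
    (S : Set (Fin n →₀ ℕ)) (hS : IsAlmostRevLex S) :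
    IsAlmostRevLex {β : Fin (n + 1) →₀ ℕ | restrictFront β ∈ S} := by
  obtain ⟨hMI, hAR⟩ := hS
  constructor
  · intro β hβ γ
    simp only [Set.mem_setOf_eq, restrictFront_add] at *
    exact hMI _ hβ _
  · rintro β ⟨hβS, hβmin⟩ γ hdeg hlt
    simp only [Set.mem_setOf_eq] at hβS ⊢
    have hrEmb : ∀ (α' : Fin n →₀ ℕ), α' ≤ restrictFront β →
        Finsupp.embDomain (frontEmb n) α' ≤ β := by
      intro α' hle
      rw [Finsupp.le_def]
      intro i
      induction i using Fin.lastCases with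
      | last => rw [embDomain_last]; exact Nat.zero_le _
      | cast j =>
          rw [show ((Finsupp.embDomain (frontEmb n) α') j.castSucc : ℕ) = α' j from
            Finsupp.embDomain_apply_self (frontEmb n) α' j]
          exact le_trans (hle j) (le_of_eq (restrictFront_apply β j))
    have hβlast : β (Fin.last n) = 0 := by
      have h := hβmin (Finsupp.embDomain (frontEmb n) (restrictFront β))
        (by simp only [Set.mem_setOf_eq, restrict_embDomain]; exact hβS)
        (hrEmb _ le_rfl)
      rw [← h, embDomain_last]
    have hmg : MinGen S (restrictFront β) := by
      refine ⟨hβS, fun α' hα'S hα'le => ?_⟩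
      have h := hβmin (Finsupp.embDomain (frontEmb n) α')
        (by simp only [Set.mem_setOf_eq, restrict_embDomain]; exact hα'S)
        (hrEmb _ hα'le)
      calc α' = restrictFront (Finsupp.embDomain (frontEmb n) α') := (restrict_embDomain α').symm
        _ = restrictFront β := by rw [h]
    rcases hlt with h | ⟨_, i, hγi, hj⟩
    · omega
    · have hine : i ≠ Fin.last n := by
        intro h; rw [h, hβlast] at hγi; omega
      obtain ⟨i', rfl⟩ := Fin.exists_castSucc_eq.mpr hine
      have hγlast : γ (Fin.last n) = 0 := by
        rw [← hj (Fin.last n) (Fin.castSucc_lt_last i'), hβlast]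
      have hdeg' : mdeg (restrictFront γ) = mdeg (restrictFront β) := by
        have h1 := mdeg_restrict β
        have h2 := mdeg_restrict γ
        rw [hβlast] at h1
        rw [hγlast] at h2
        omega
      refine hAR (restrictFront β) hmg (restrictFront γ) hdeg' (Or.inr ⟨hdeg'.symm, i', ?_, ?_⟩)
      · rw [restrictFront_apply, restrictFront_apply]; exact hγi
      · intro j' hj'
        rw [restrictFront_apply, restrictFront_apply]
        exact hj j'.castSucc (by exact_mod_cast Fin.castSucc_lt_castSucc_iff.mpr hj')
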